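/- Let B = {b_0,...,b_{K−1}} ⊂ ℝ^d be linearly independent unit vectors with Gram–Schmidt diagonal lower bound δ = min_j |b_jᵀ u_j| > 0. Suppose f = Σ_j m_j b_j with m_j ∈ ℝ, and suppose ‖b_0 − f‖₂ ≤ ε. Then for every j ≥ 1, |m_j| ≤ ε (1 + 1/δ)^{K−j−1} / δ, and |1 − m_0| ≤ ε (1 + 1/δ)^{K−1}. -/

import Mathlib

open scoped RealInnerProductSpace

/-- Gram–Schmidt orthonormalization of a family indexed by `Fin K`. -/
noncomputable def gramSchmidtNormedFin (K d : ℕ)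
    (b : Fin K → EuclideanSpace ℝ (Fin d)) : Fin K → EuclideanSpace ℝ (Fin d) :=
  @InnerProductSpace.gramSchmidtNormed ℝ _ _ _ _ (Fin K) Fin.instLinearOrder inferInstance
    (inferInstanceAs (WellFoundedLT (Fin K))) b

/-- coefficient bounds from a Gram–Schmidt diagonal lower bound. -/
theorem stmt5 (K d : ℕ) (hK : 0 < K)
    (b : Fin K → EuclideanSpace ℝ (Fin d))
    (hli : LinearIndependent ℝ b) (hunit : ∀ j, ‖b j‖ = 1)
    (δ ε : ℝ)
    (hδ : δ = Finset.univ.inf' ⟨⟨0, hK⟩, Finset.mem_univ _⟩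
        (fun j => |(⟪b j, gramSchmidtNormedFin K d b j⟫ : ℝ)|))
    (hδpos : 0 < δ)
    (m : Fin K → ℝ) (hf : ‖b ⟨0, hK⟩ - ∑ j, m j • b j‖ ≤ ε) :
    (∀ j : Fin K, 1 ≤ j.val →
        |m j| ≤ ε * (1 + 1 / δ) ^ (K - j.val - 1) / δ) ∧
    |1 - m ⟨0, hK⟩| ≤ ε * (1 + 1 / δ) ^ (K - 1) := by
  classical
  have hε0 : 0 ≤ ε := le_trans (norm_nonneg _) hf
  set r : ℝ := 1 + 1 / δ with hr
  have hr0 : 0 < r := by rw [hr]; positivity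
  set z : Fin K := ⟨0, hK⟩ with hz
  set g : Fin K → EuclideanSpace ℝ (Fin d) :=
    @InnerProductSpace.gramSchmidt ℝ _ _ _ _ (Fin K) Fin.instLinearOrder inferInstance
      (inferInstanceAs (WellFoundedLT (Fin K))) b with hg
  set u : Fin K → EuclideanSpace ℝ (Fin d) := gramSchmidtNormedFin K d b with hu
  have hu' : ∀ j, u j = (‖g j‖)⁻¹ • g j := fun _ => rfl
  have hon : Orthonormal ℝ u :=
    @InnerProductSpace.gramSchmidtNormed_orthonormal ℝ _ _ _ _ (Fin K) Fin.instLinearOrder inferInstance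
      (inferInstanceAs (WellFoundedLT (Fin K))) b hli
  have hun : ∀ j, ‖u j‖ = 1 := hon.1
  have htri : ∀ {l j : Fin K}, l < j → ⟪u j, b l⟫ = 0 := by
    intro l j hlj
    have h1 : ⟪g j, b l⟫ = 0 :=
      @InnerProductSpace.gramSchmidt_inv_triangular ℝ _ _ _ _ (Fin K) Fin.instLinearOrder inferInstance
        (inferInstanceAs (WellFoundedLT (Fin K))) b _ _ hlj
    rw [hu' j, real_inner_smul_left, h1, mul_zero]
  have hβδ : ∀ j, δ ≤ |⟪u j, b j⟫| := by
    intro j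
    rw [real_inner_comm, hδ]
    exact Finset.inf'_le _ (Finset.mem_univ j)
  have habs : ∀ j l : Fin K, |⟪u j, b l⟫| ≤ 1 := by
    intro j l
    have h := abs_real_inner_le_norm (u j) (b l)
    rwa [hun j, hunit l, one_mul] at h
  set c : Fin K → ℝ := fun l => m l - (if l = z then 1 else 0) with hc
  have hv : ‖∑ l, c l • b l‖ ≤ ε := by
    have heq : ∑ l, c l • b l = -(b z - ∑ l, m l • b l) := by
      simp only [hc, sub_smul, ite_smul, one_smul, zero_smul, Finset.sum_sub_distrib, neg_sub]
      congr 1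
      simp
    rw [heq, norm_neg]
    exact hf
  have hinner : ∀ j : Fin K, |∑ l, c l * ⟪u j, b l⟫| ≤ ε := by
    intro j
    have h1 : ⟪u j, ∑ l, c l • b l⟫ = ∑ l, c l * ⟪u j, b l⟫ := by
      simp only [inner_sum, real_inner_smul_right]
    calc |∑ l, c l * ⟪u j, b l⟫| = |⟪u j, ∑ l, c l • b l⟫| := by rw [h1]
      _ ≤ ‖u j‖ * ‖∑ l, c l • b l‖ := abs_real_inner_le_norm _ _
      _ ≤ ε := by rw [hun j, one_mul]; exact hv
  set C : ℕ → ℝ := fun t => if h : t < K then |c ⟨t, h⟩| else 0 with hCdef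
  have hC0 : ∀ t, 0 ≤ C t := by
    intro t
    by_cases h : t < K <;> simp [hCdef, h]
  have hB' : ∀ t (ht : t < K),
      |c ⟨t, ht⟩ * ⟪u ⟨t, ht⟩, b ⟨t, ht⟩⟫| ≤ ε + ∑ l ∈ Finset.Ico (t + 1) K, C l := by
    intro t ht
    set j : Fin K := ⟨t, ht⟩ with hj
    set D : ℕ → ℝ := fun l => if h : l < K then c ⟨l, h⟩ * ⟪u j, b ⟨l, h⟩⟫ else 0 with hD
    have h0 : ∑ l : Fin K, c l * ⟪u j, b l⟫ = ∑ l ∈ Finset.range K, D l := by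
      rw [← Fin.sum_univ_eq_sum_range D K]
      refine Finset.sum_congr rfl fun i _ => ?_
      simp [hD, i.isLt]
    have hsplit : ∑ l ∈ Finset.range K, D l
        = (∑ l ∈ Finset.Ico 0 t, D l) + ∑ l ∈ Finset.Ico t K, D l := by
      rw [Finset.range_eq_Ico, ← Finset.sum_Ico_consecutive _ (Nat.zero_le t) ht.le]
    have hlow : ∑ l ∈ Finset.Ico 0 t, D l = 0 := by
      refine Finset.sum_eq_zero fun l hl => ?_
      have hlt : l < t := (Finset.mem_Ico.mp hl).2
      have hlK : l < K := hlt.trans ht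
      have hfin : (⟨l, hlK⟩ : Fin K) < j := hlt
      simp only [hD]
      rw [dif_pos hlK, htri hfin, mul_zero]
    have htop : ∑ l ∈ Finset.Ico t K, D l = D t + ∑ l ∈ Finset.Ico (t + 1) K, D l :=
      Finset.sum_eq_sum_Ico_succ_bot ht D
    have hDt : D t = c j * ⟪u j, b j⟫ := by simp [hD, ht, hj]
    have h2 : c j * ⟪u j, b j⟫
        = (∑ l : Fin K, c l * ⟪u j, b l⟫) - ∑ l ∈ Finset.Ico (t + 1) K, D l := by
      rw [h0, hsplit, hlow, htop, hDt]; ring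
    have hDC : ∀ l ∈ Finset.Ico (t + 1) K, |D l| ≤ C l := by
      intro l hl
      have hlK : l < K := (Finset.mem_Ico.mp hl).2
      have : |D l| = |c ⟨l, hlK⟩| * |⟪u j, b ⟨l, hlK⟩⟫| := by
        rw [hD]; simp [hlK, abs_mul]
      rw [this, hCdef]
      simp only [hlK, dif_pos]
      calc |c ⟨l, hlK⟩| * |⟪u j, b ⟨l, hlK⟩⟫| ≤ |c ⟨l, hlK⟩| * 1 :=
            mul_le_mul_of_nonneg_left (habs j _) (abs_nonneg _)
        _ = |c ⟨l, hlK⟩| := mul_one _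
    calc |c j * ⟪u j, b j⟫|
        = |(∑ l : Fin K, c l * ⟪u j, b l⟫) - ∑ l ∈ Finset.Ico (t + 1) K, D l| := by rw [h2]
      _ ≤ |∑ l : Fin K, c l * ⟪u j, b l⟫| + |∑ l ∈ Finset.Ico (t + 1) K, D l| :=
          abs_sub _ _
      _ ≤ ε + ∑ l ∈ Finset.Ico (t + 1) K, |D l| :=
          add_le_add (hinner j) (Finset.abs_sum_le_sum_abs _ _)
      _ ≤ ε + ∑ l ∈ Finset.Ico (t + 1) K, C l :=
          add_le_add_right (Finset.sum_le_sum hDC) _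
  have hB : ∀ t (ht : t < K), δ * C t ≤ ε + ∑ l ∈ Finset.Ico (t + 1) K, C l := by
    intro t ht
    refine le_trans ?_ (hB' t ht)
    rw [abs_mul]
    have hCt : C t = |c ⟨t, ht⟩| := by rw [hCdef]; simp [ht]
    rw [hCt, mul_comm]
    exact mul_le_mul_of_nonneg_left (hβδ _) (abs_nonneg _)
  have hA : ∀ n t, t + n = K → ε + ∑ l ∈ Finset.Ico t K, C l ≤ ε * r ^ n := by
    intro n
    induction n with
    | zero =>
      intro t htK
      have : t = K := by omega
      subst this
      simp
    | succ n ih =>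
      intro t htK
      have ht : t < K := by omega
      have ihS := ih (t + 1) (by omega)
      have hBt := hB t ht
      have hsum : ∑ l ∈ Finset.Ico t K, C l = C t + ∑ l ∈ Finset.Ico (t + 1) K, C l :=
        Finset.sum_eq_sum_Ico_succ_bot ht C
      set S := ∑ l ∈ Finset.Ico (t + 1) K, C l with hS
      have hS0 : 0 ≤ S := Finset.sum_nonneg fun l _ => hC0 l
      have h1 : ε + (C t + S) ≤ (ε + S) * r := by
        rw [hr, mul_add, mul_one, mul_one_div]
        have hCt : C t ≤ (ε + S) / δ := by
          rw [le_div_iff₀ hδpos, mul_comm]; exact hBt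
        linarith
      calc ε + ∑ l ∈ Finset.Ico t K, C l = ε + (C t + S) := by rw [hsum]
        _ ≤ (ε + S) * r := h1
        _ ≤ (ε * r ^ n) * r := mul_le_mul_of_nonneg_right ihS hr0.le
        _ = ε * r ^ (n + 1) := by ring
  constructor
  · intro j _
    have ht := j.isLt
    have hBj := hB j.val ht
    have hAj := hA (K - (j.val + 1)) (j.val + 1) (by omega)
    have hCj : C j.val = |c j| := by rw [hCdef]; simp [ht]
    have hmc : c j = m j := by
      rw [hc]
      simp only
      rw [if_neg, sub_zero]
      intro h
      have : j.val = 0 := by rw [h, hz]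
      omega
    rw [le_div_iff₀ hδpos]
    have hexp : K - j.val - 1 = K - (j.val + 1) := by omega
    rw [hexp]
    calc |m j| * δ = δ * C j.val := by rw [hCj, hmc]; ring
      _ ≤ ε + ∑ l ∈ Finset.Ico (j.val + 1) K, C l := hBj
      _ ≤ ε * r ^ (K - (j.val + 1)) := by linarith [hAj]
  · have hIio : Finset.Iio z = (∅ : Finset (Fin K)) := by
      apply Finset.eq_empty_of_forall_notMem
      intro x hx
      have hxz : x < z := Finset.mem_Iio.mp hx
      have : x.val < 0 := hxz
      omega
    have hgz : g z = b z := by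
      have hd := @InnerProductSpace.gramSchmidt_def ℝ _ _ _ _ (Fin K) Fin.instLinearOrder inferInstance
        (inferInstanceAs (WellFoundedLT (Fin K))) b z
      rw [show (@InnerProductSpace.gramSchmidt ℝ _ _ _ _ (Fin K) Fin.instLinearOrder inferInstance
        (inferInstanceAs (WellFoundedLT (Fin K))) b z) = g z from rfl, hIio] at hd
      simpa using hd
    have huz : ⟪u z, b z⟫ = (1 : ℝ) := by
      rw [hu' z, hgz, hunit z, inv_one, one_smul, real_inner_self_eq_norm_mul_norm,
        hunit z, one_mul]
    have hB0 := hB' 0 hK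
    rw [show (⟨0, hK⟩ : Fin K) = z from rfl] at hB0
    rw [huz, mul_one] at hB0
    have hA0 := hA (K - 1) 1 (by omega)
    have hcz : |c z| = |1 - m z| := by
      have hczv : c z = m z - 1 := by rw [hc]; simp
      rw [hczv, abs_sub_comm]
    calc |1 - m z| = |c z| := hcz.symm
      _ ≤ ε + ∑ l ∈ Finset.Ico 1 K, C l := hB0
      _ ≤ ε * r ^ (K - 1) := by linarith [hA0]
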